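/- Let J be a letterplace ideal of P̄ with D ⊆ J. Then Sat_L(J) is an L-saturated letterplace ideal of P̄ containing J, and Sat_L(J) ⊆ Sat(J). -/

import Mathlib

noncomputable section

/-! ### Common definitions for the letterplace correspondence (La Scala)

`FA K Y` is the free associative algebra `K⟨Y⟩` (monoid algebra of the free monoid on `Y`);
`PL K Y` is the letterplace polynomial algebra `K[y(j) : y ∈ Y, j ∈ ℕ*]`.
The algebra `F̄ = K⟨X ∪ {t}⟩` is modeled as `FA K (Option X)` with `t = none`,
and similarly `P̄ = PL K (Option X)`. -/

/-- The free associative algebra `K⟨Y⟩`. -/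
abbrev FA (K : Type*) [CommSemiring K] (Y : Type*) := MonoidAlgebra K (FreeMonoid Y)

/-- The letterplace polynomial algebra `K[y(j)]`, with places in `ℕ* = ℕ+`. -/
abbrev PL (K : Type*) [CommSemiring K] (Y : Type*) := MvPolynomial (Y × ℕ+) K

variable (K : Type*) [Field K]

/-- The generator of `K⟨Y⟩` corresponding to a letter. -/
def gen {Y : Type*} (y : Y) : FA K Y := MonoidAlgebra.of K (FreeMonoid Y) (FreeMonoid.of y)

/-- The extra letter `t` of `F̄ = K⟨X ∪ {t}⟩`. -/
def tv {X : Type*} : FA K (Option X) := gen K (none : Option X)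

/-- `φ : F̄ → F̄`, the algebra endomorphism with `φ(x_i) = x_i`, `φ(t) = 1`. -/
def phi {X : Type*} : FA K (Option X) →ₐ[K] FA K (Option X) :=
  (MonoidAlgebra.lift K (FA K (Option X)) (FreeMonoid (Option X)))
    (FreeMonoid.lift fun o => Option.elim o 1 (fun x => gen K (some x)))

/-- `f` is homogeneous of degree `d` (all words in its support have length `d`). -/
def IsHomog {Y : Type*} (d : ℕ) (f : FA K Y) : Prop :=
  ∀ w ∈ f.coeff.support, FreeMonoid.length w = d

/-- The homogeneous component of degree `d` of `f ∈ K⟨Y⟩`. -/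
def homComp {Y : Type*} (d : ℕ) (f : FA K Y) : FA K Y :=
  ∑ w ∈ f.coeff.support.filter (fun w => FreeMonoid.length w = d), MonoidAlgebra.single w (f.coeff w)

/-- A two-sided ideal is graded (for the grading by total degree) iff it contains all
homogeneous components of its elements. -/
def IsGradedF {Y : Type*} (I : TwoSidedIdeal (FA K Y)) : Prop := ∀ f ∈ I, ∀ d, homComp K d f ∈ I

/-- `C ⊆ F̄`: the two-sided ideal generated by all homogeneous elements of `ker φ`,
i.e. the largest graded ideal contained in `ker φ`. -/
def Cideal {X : Type*} : TwoSidedIdeal (FA K (Option X)) :=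
  TwoSidedIdeal.span {f | (∃ d, IsHomog K d f) ∧ phi K f = 0}

/-- The embedding of free monoids `X* → (X ∪ {t})*`. -/
def embWord {X : Type*} : FreeMonoid X →* FreeMonoid (Option X) := FreeMonoid.map some

/-- The canonical embedding `F = K⟨X⟩ → F̄ = K⟨X ∪ {t}⟩`. -/
def emb {X : Type*} : FA K X →ₐ[K] FA K (Option X) :=
  (MonoidAlgebra.lift K (FA K (Option X)) (FreeMonoid X))
    ((MonoidAlgebra.of K (FreeMonoid (Option X))).comp embWord)

/-- The top degree `deg(f)` of `f` (max length of a word in the support). -/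
def degF {Y : Type*} (f : FA K Y) : ℕ := f.coeff.support.sup FreeMonoid.length

/-- The homogenization `f^* = Σ_k f_k t^{deg f − k} ∈ F̄` of `f ∈ F`. -/
def hstar {X : Type*} (f : FA K X) : FA K (Option X) :=
  ∑ w ∈ f.coeff.support,
    MonoidAlgebra.single
      (embWord w * (FreeMonoid.of (none : Option X)) ^ (degF K f - FreeMonoid.length w)) (f.coeff w)

/-- Homogenization of an element already written in `F̄` (used for elements of `φ(F̄) = F`). -/
def hstarO {X : Type*} (f : FA K (Option X)) : FA K (Option X) :=
  ∑ w ∈ f.coeff.support,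
    MonoidAlgebra.single
      (w * (FreeMonoid.of (none : Option X)) ^ (degF K f - FreeMonoid.length w)) (f.coeff w)

/-- The homogenization `I^*` of an ideal `I ⊆ F`: the two-sided ideal of `F̄` generated by all
homogeneous elements of `φ⁻¹(I)` (identifying `F` with its image in `F̄`). -/
def hstarIdeal {X : Type*} (I : TwoSidedIdeal (FA K X)) : TwoSidedIdeal (FA K (Option X)) :=
  TwoSidedIdeal.span {g | (∃ d, IsHomog K d g) ∧ ∃ f ∈ I, phi K g = emb K f}

/-- The saturation `Sat(J) = φ(J)^*` of a graded ideal `C ⊆ J ⊆ F̄`: the two-sided ideal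
generated by all homogeneous elements `g` with `φ(g) ∈ φ(J)`. -/
def SatF {X : Type*} (J : TwoSidedIdeal (FA K (Option X))) : TwoSidedIdeal (FA K (Option X)) :=
  TwoSidedIdeal.span {g | (∃ d, IsHomog K d g) ∧ ∃ h ∈ J, phi K g = phi K h}

/-! ### The commutative (letterplace) side -/

/-- The shift of letterplace variables: `k · y(j) = y(j + k)`. -/
def shiftVar {Y : Type*} (k : ℕ) (p : Y × ℕ+) : Y × ℕ+ :=
  (p.1, ⟨p.2 + k, Nat.add_pos_left p.2.2 k⟩)

/-- The action of `k ∈ ℕ` on the letterplace algebra. -/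
def shift {Y : Type*} (k : ℕ) : PL K Y →ₐ[K] PL K Y := MvPolynomial.rename (shiftVar k)

/-- An ideal of `PL K Y` is an ℕ-ideal if it is stable under all shifts. -/
def IsNIdeal {Y : Type*} (I : Ideal (PL K Y)) : Prop := ∀ k, ∀ f ∈ I, shift K k f ∈ I

/-- The ℕ-ideal `⟨S⟩_ℕ` generated by a set `S`. -/
def nspan {Y : Type*} (S : Set (PL K Y)) : Ideal (PL K Y) :=
  Ideal.span {g | ∃ k, ∃ f ∈ S, g = shift K k f}

/-- The place multidegree `∂(m)` of a monomial. -/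
def placeDeg {Y : Type*} (m : (Y × ℕ+) →₀ ℕ) : ℕ+ →₀ ℕ := Finsupp.mapDomain Prod.snd m

/-- `f` is multihomogeneous of place multidegree `μ`. -/
def IsMultiHomog {Y : Type*} (μ : ℕ+ →₀ ℕ) (f : PL K Y) : Prop :=
  ∀ m ∈ f.support, placeDeg m = μ

/-- The multihomogeneous component of multidegree `μ` of `f`. -/
def mComp {Y : Type*} (μ : ℕ+ →₀ ℕ) (f : PL K Y) : PL K Y :=
  ∑ m ∈ f.support.filter (fun m => placeDeg m = μ),
    MvPolynomial.monomial m (MvPolynomial.coeff m f)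

/-- An ideal is multigraded iff it contains all multihomogeneous components of its elements. -/
def IsMultiGraded {Y : Type*} (I : Ideal (PL K Y)) : Prop := ∀ f ∈ I, ∀ μ, mComp K μ f ∈ I

/-- `ψ : P̄ → P̄`, with `ψ(x_i(j)) = x_i(j)` and `ψ(t(j)) = 1`. -/
def psi {X : Type*} : PL K (Option X) →ₐ[K] PL K (Option X) :=
  MvPolynomial.aeval (fun p => Option.elim p.1 1 (fun x => MvPolynomial.X (some x, p.2)))

/-- The canonical embedding `P → P̄`. -/
def embP {X : Type*} : PL K X →ₐ[K] PL K (Option X) :=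
  MvPolynomial.rename (fun p => (some p.1, p.2))

/-- The top multidegree `∂(f)` of `f` (componentwise max over the support). -/
def topDeg {Y : Type*} (f : PL K Y) : ℕ+ →₀ ℕ := f.support.sup placeDeg

/-- The pure-`t` monomial `∏_k t(k)^{ν_k}` with exponents `ν`. -/
def tExp {X : Type*} (ν : ℕ+ →₀ ℕ) : ((Option X) × ℕ+) →₀ ℕ :=
  Finsupp.mapDomain (fun k => ((none : Option X), k)) ν

/-- The multihomogenization `f^* = Σ_μ f_μ ∏_k t(k)^{ν_k − μ_k} ∈ P̄` of `f ∈ P`. -/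
def mhstar {X : Type*} (f : PL K X) : PL K (Option X) :=
  ∑ m ∈ f.support,
    MvPolynomial.monomial
      (Finsupp.mapDomain (fun p => ((some p.1 : Option X), p.2)) m +
        tExp (topDeg K f - placeDeg m))
      (MvPolynomial.coeff m f)

/-- Multihomogenization of an element already written in `P̄` (used for elements of `ψ(P̄) = P`). -/
def mhstarO {X : Type*} (f : PL K (Option X)) : PL K (Option X) :=
  ∑ m ∈ f.support,
    MvPolynomial.monomial (m + tExp (topDeg K f - placeDeg m)) (MvPolynomial.coeff m f)

/-- The multihomogenization `I^*` of an ℕ-ideal `I ⊆ P`: the ℕ-ideal of `P̄` generated by all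
multihomogeneous elements of `ψ⁻¹(I)` (identifying `P` with its image in `P̄`). -/
def mhstarIdeal {X : Type*} (I : Ideal (PL K X)) : Ideal (PL K (Option X)) :=
  nspan K {g | (∃ μ, IsMultiHomog K μ g) ∧ ∃ f ∈ I, psi K g = embP K f}

/-- The saturation `Sat(J) = ψ(J)^*` of a multigraded ℕ-ideal `J ⊆ P̄`. -/
def SatP {X : Type*} (J : Ideal (PL K (Option X))) : Ideal (PL K (Option X)) :=
  nspan K {g | (∃ μ, IsMultiHomog K μ g) ∧ ∃ h ∈ J, psi K g = psi K h}

/-! ### The letterplace embedding -/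

/-- Exponent vector of the letterplace monomial `y_1(n+1) y_2(n+2) ⋯` of a word. -/
def wordExpAux {Y : Type*} : ℕ → List Y → ((Y × ℕ+) →₀ ℕ)
  | _, [] => 0
  | n, y :: w => Finsupp.single (y, ⟨n + 1, n.succ_pos⟩) 1 + wordExpAux (n + 1) w

/-- The letterplace monomial `y_1(1) y_2(2) ⋯ y_d(d)` of a word `y_1 y_2 ⋯ y_d`. -/
def wordExp {Y : Type*} (w : FreeMonoid Y) : (Y × ℕ+) →₀ ℕ := wordExpAux 0 (FreeMonoid.toList w)

/-- The letterplace embedding `ι : K⟨Y⟩ → PL K Y` (a `K`-linear map). -/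
def iota {Y : Type*} (f : FA K Y) : PL K Y :=
  Finsupp.sum f.coeff fun w c => MvPolynomial.monomial (wordExp w) c

/-- The set `L` of multilinear elements of `PL K Y`: multihomogeneous elements of `V = Im ι`. -/
def Lset {Y : Type*} : Set (PL K Y) :=
  {f | f ∈ Set.range (iota K (Y := Y)) ∧ ∃ μ, IsMultiHomog K μ f}

/-- A letterplace ideal (`L`-ideal): an ℕ-ideal ℕ-generated by its multilinear elements. -/
def IsLPIdeal {Y : Type*} (J : Ideal (PL K Y)) : Prop :=
  IsNIdeal K J ∧ J = nspan K ((J : Set (PL K Y)) ∩ Lset K)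

/-- The generators `x_i(1)t(2) − t(1)x_i(2)` of `D`. -/
def Dgens (X : Type*) : Set (PL K (Option X)) :=
  {g | ∃ x : X,
    g = MvPolynomial.X ((some x : Option X), (1 : ℕ+)) *
          MvPolynomial.X ((none : Option X), (2 : ℕ+)) -
        MvPolynomial.X ((none : Option X), (1 : ℕ+)) *
          MvPolynomial.X ((some x : Option X), (2 : ℕ+))}

/-- The generators `ῑ([t, x_i]) = t(1)x_i(2) − x_i(1)t(2)` of `D`. -/
def DgensT (X : Type*) : Set (PL K (Option X)) :=
  {g | ∃ x : X,
    g = MvPolynomial.X ((none : Option X), (1 : ℕ+)) *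
          MvPolynomial.X ((some x : Option X), (2 : ℕ+)) -
        MvPolynomial.X ((some x : Option X), (1 : ℕ+)) *
          MvPolynomial.X ((none : Option X), (2 : ℕ+))}

/-- `D ⊆ P̄`: the letterplace analogue of `C`. -/
def Did (X : Type*) : Ideal (PL K (Option X)) := nspan K (Dgens K X)

/-- The product `∏_{d < k ≤ d'} t(k)`. -/
def tProd (X : Type*) (d d' : ℕ) : PL K (Option X) :=
  ∏ k ∈ Finset.range (d' - d), MvPolynomial.X ((none : Option X), ⟨d + k + 1, Nat.succ_pos _⟩)

/-- The `L`-saturation `Sat_L(J)` of a letterplace ideal `D ⊆ J ⊆ P̄`. -/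
def SatL {X : Type*} (J : Ideal (PL K (Option X))) : Ideal (PL K (Option X)) :=
  nspan K {f | f ∈ Lset K ∧ ∃ d', MvPolynomial.totalDegree f ≤ d' ∧
    tProd K X (MvPolynomial.totalDegree f) d' * f ∈ J}

/-- `J` is `L`-saturated: `t(d+1)·f ∈ J` with `f` multilinear of degree `d` implies `f ∈ J`. -/
def IsLSat {X : Type*} (J : Ideal (PL K (Option X))) : Prop :=
  ∀ f ∈ Lset K (Y := Option X),
    MvPolynomial.X ((none : Option X), ⟨MvPolynomial.totalDegree f + 1, Nat.succ_pos _⟩) * f ∈ J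
      → f ∈ J

/-! ### Monomial orderings -/

/-- The shift action on letterplace monomials. -/
def shiftMon {Y : Type*} (k : ℕ) (m : (Y × ℕ+) →₀ ℕ) : (Y × ℕ+) →₀ ℕ :=
  Finsupp.mapDomain (shiftVar k) m

/-- A monomial ordering of a (possibly infinite) commutative polynomial ring, given as a strict
order relation on exponent vectors: a well-founded strict total order with `1` minimal,
compatible with multiplication of monomials. -/
structure IsMonOrd {σ : Type*} (r : (σ →₀ ℕ) → (σ →₀ ℕ) → Prop) : Prop where
  total : ∀ m n, r m n ∨ m = n ∨ r n m
  irrefl : ∀ m, ¬ r m m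
  trans : ∀ a b c, r a b → r b c → r a c
  wf : WellFounded r
  zero_min : ∀ m, ¬ r m 0
  add_compat : ∀ m n u, r m n → r (u + m) (u + n)

/-- The ordering is compatible with the ℕ-action (an `ℕ`-ordering). -/
def IsNCompat {Y : Type*} (r : ((Y × ℕ+) →₀ ℕ) → ((Y × ℕ+) →₀ ℕ) → Prop) : Prop :=
  ∀ (k : ℕ) m n, r m n → r (shiftMon k m) (shiftMon k n)

/-- The weight of a letterplace monomial: the largest place index occurring in it
(`⊥ = -∞` for the monomial `1`). -/
def wt {Y : Type*} (m : (Y × ℕ+) →₀ ℕ) : WithBot ℕ :=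
  m.support.sup (fun p => ((p.2 : ℕ) : WithBot ℕ))

/-- A weighted ordering: smaller weight implies smaller monomial. -/
def IsWeighted {Y : Type*} (r : ((Y × ℕ+) →₀ ℕ) → ((Y × ℕ+) →₀ ℕ) → Prop) : Prop :=
  ∀ m n, wt m < wt n → r m n

/-- A monomial ordering of the free algebra `K⟨Y⟩`: a well-founded strict total order on words
compatible with two-sided multiplication. -/
structure IsWordOrd {Y : Type*} (r : FreeMonoid Y → FreeMonoid Y → Prop) : Prop where
  total : ∀ m n, r m n ∨ m = n ∨ r n m
  irrefl : ∀ m, ¬ r m m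
  trans : ∀ a b c, r a b → r b c → r a c
  wf : WellFounded r
  mul_compat : ∀ m n u v, r m n → r (u * m * v) (u * n * v)

/-- A word ordering is graded if shorter words are smaller. -/
def IsGradedWordOrd {Y : Type*} (r : FreeMonoid Y → FreeMonoid Y → Prop) : Prop :=
  ∀ m n, FreeMonoid.length m < FreeMonoid.length n → r m n

/-- The word ordering of `K⟨Y⟩` induced by a monomial ordering of `PL K Y` via `ι`. -/
def inducedWordOrd {Y : Type*} (r : ((Y × ℕ+) →₀ ℕ) → ((Y × ℕ+) →₀ ℕ) → Prop)
    (m n : FreeMonoid Y) : Prop := r (wordExp m) (wordExp n)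

/-- The factor of a letterplace monomial at place `j` (a monomial of `P(j) ≅ P(1)`). -/
def fiber {Y : Type*} (m : (Y × ℕ+) →₀ ℕ) (j : ℕ+) : Y →₀ ℕ :=
  Finsupp.comapDomain (fun y => (y, j)) m (fun _ _ _ _ h => congrArg Prod.fst h)

/-- The place `ℕ`-ordering of `PL K Y` induced by a monomial ordering `r1` of `P(1)`:
compare the factors at the highest place where the two monomials differ. -/
def placeExt {Y : Type*} (r1 : (Y →₀ ℕ) → (Y →₀ ℕ) → Prop)
    (m n : (Y × ℕ+) →₀ ℕ) : Prop :=
  ∃ j : ℕ+, r1 (fiber m j) (fiber n j) ∧ ∀ j', j < j' → fiber m j' = fiber n j'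

/-! ### Leading monomials and Gröbner bases -/

/-- `m` is the leading monomial of `f ∈ PL K Y` with respect to the ordering `r`. -/
def IsLM {Y : Type*} (r : ((Y × ℕ+) →₀ ℕ) → ((Y × ℕ+) →₀ ℕ) → Prop)
    (f : PL K Y) (m : (Y × ℕ+) →₀ ℕ) : Prop :=
  m ∈ f.support ∧ ∀ m' ∈ f.support, m' ≠ m → r m' m

/-- `LM(S)`: the ideal generated by the leading monomials of the nonzero elements of `S`. -/
def LMideal {Y : Type*} (r : ((Y × ℕ+) →₀ ℕ) → ((Y × ℕ+) →₀ ℕ) → Prop)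
    (S : Set (PL K Y)) : Ideal (PL K Y) :=
  Ideal.span {p | ∃ f ∈ S, f ≠ 0 ∧ ∃ m, IsLM K r f m ∧ p = MvPolynomial.monomial m (1 : K)}

/-- The ideal generated by `ℕ·lm(G)`. -/
def shLMideal {Y : Type*} (r : ((Y × ℕ+) →₀ ℕ) → ((Y × ℕ+) →₀ ℕ) → Prop)
    (G : Set (PL K Y)) : Ideal (PL K Y) :=
  Ideal.span {p | ∃ g ∈ G, g ≠ 0 ∧ ∃ m, IsLM K r g m ∧
    ∃ k : ℕ, p = MvPolynomial.monomial (shiftMon k m) (1 : K)}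

/-- `G ⊆ I` is a Gröbner `ℕ`-basis of the ℕ-ideal `I`: `ℕ·lm(G)` generates `LM(I)`. -/
def IsGroebnerNB {Y : Type*} (r : ((Y × ℕ+) →₀ ℕ) → ((Y × ℕ+) →₀ ℕ) → Prop)
    (I : Ideal (PL K Y)) (G : Set (PL K Y)) : Prop :=
  G ⊆ (I : Set (PL K Y)) ∧ shLMideal K r G = LMideal K r (I : Set (PL K Y))

/-- `G` is a Gröbner `L`-basis of the letterplace ideal `J`: `G ⊆ J ∩ L` and the leading monomial
of every nonzero multilinear element of `J` is divisible by a shift of some `lm(g)`, `g ∈ G`. -/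
def IsGroebnerLB {Y : Type*} (r : ((Y × ℕ+) →₀ ℕ) → ((Y × ℕ+) →₀ ℕ) → Prop)
    (J : Ideal (PL K Y)) (G : Set (PL K Y)) : Prop :=
  G ⊆ (J : Set (PL K Y)) ∩ Lset K ∧
  ∀ f ∈ (J : Set (PL K Y)) ∩ Lset K, f ≠ 0 →
    ∃ g ∈ G, ∃ (k : ℕ) (mg mf : (Y × ℕ+) →₀ ℕ),
      IsLM K r g mg ∧ IsLM K r f mf ∧ shiftMon k mg ≤ mf

/-- `w` is the leading monomial (word) of `f ∈ K⟨Y⟩` with respect to the word ordering `r'`. -/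
def IsLMF {Y : Type*} (r' : FreeMonoid Y → FreeMonoid Y → Prop)
    (f : FA K Y) (w : FreeMonoid Y) : Prop :=
  w ∈ f.coeff.support ∧ ∀ w' ∈ f.coeff.support, w' ≠ w → r' w' w

/-- `G ⊆ I` is a Gröbner basis of the two-sided ideal `I ⊆ K⟨Y⟩`: the leading word of every
nonzero `f ∈ I` has the form `u · lm(g) · v` for some nonzero `g ∈ G`. -/
def IsGroebnerBF {Y : Type*} (r' : FreeMonoid Y → FreeMonoid Y → Prop)
    (I : TwoSidedIdeal (FA K Y)) (G : Set (FA K Y)) : Prop :=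
  G ⊆ (I : Set (FA K Y)) ∧
  ∀ f ∈ I, f ≠ 0 → ∃ g ∈ G, g ≠ 0 ∧ ∃ (u v wf wg : FreeMonoid Y),
    IsLMF K r' f wf ∧ IsLMF K r' g wg ∧ wf = u * wg * v

/-! ### Normal forms -/

/-- The generators `x_i(1) x_j(1)` of `N`. -/
def Ngens (Y : Type*) : Set (PL K Y) :=
  {g | ∃ i j : Y, g = MvPolynomial.X (i, (1 : ℕ+)) * MvPolynomial.X (j, (1 : ℕ+))}

/-- A polynomial is in normal form modulo `N` iff in each of its monomials all place indices
are pairwise distinct. -/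
def NormalModN {Y : Type*} (f : PL K Y) : Prop :=
  ∀ m ∈ f.support, ∀ k : ℕ+, placeDeg m k ≤ 1

/-- A polynomial is in normal form modulo `D` iff none of its monomials is divisible by a shift
of the leading monomial of some generator `t(1)x_i(2) − x_i(1)t(2)` of `D`. -/
def NormalModD {X : Type*} (r : (((Option X) × ℕ+) →₀ ℕ) → (((Option X) × ℕ+) →₀ ℕ) → Prop)
    (f : PL K (Option X)) : Prop :=
  ∀ m ∈ f.support, ∀ g ∈ DgensT K X, ∀ mg, IsLM K r g mg → ∀ k : ℕ, ¬ shiftMon k mg ≤ m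

/-- `G` is a Gröbner `L`-basis of `J` modulo `D`: its elements are multilinear elements of `J`
in normal form modulo `D`, and together with the generators of `D` they form a
Gröbner `L`-basis of `J`. -/
def IsGroebnerLBmodD {X : Type*}
    (r : (((Option X) × ℕ+) →₀ ℕ) → (((Option X) × ℕ+) →₀ ℕ) → Prop)
    (J : Ideal (PL K (Option X))) (G : Set (PL K (Option X))) : Prop :=
  (∀ g ∈ G, g ∈ (J : Set (PL K (Option X))) ∩ Lset K ∧ NormalModD K r g) ∧
  IsGroebnerLB K r J (G ∪ DgensT K X)

/-- The commutators `[t, x_i] = t x_i − x_i t` in `F̄`. -/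
def commGens (X : Type*) : Set (FA K (Option X)) :=
  {h | ∃ x : X, h = tv K * gen K (some x) - gen K (some x) * tv K}

/-- A polynomial of `F̄` is in normal form modulo `C` iff none of its words contains the leading
word of some commutator `[t, x_i]` as a factor. -/
def NormalModC {X : Type*} (r' : FreeMonoid (Option X) → FreeMonoid (Option X) → Prop)
    (f : FA K (Option X)) : Prop :=
  ∀ w ∈ f.coeff.support, ∀ g ∈ commGens K X, ∀ wg, IsLMF K r' g wg →
    ¬ ∃ u v, w = u * wg * v

/-! ### Concrete orderings on words -/

/-- The order on the letters of `X ∪ {t}` (with `X = ℕ`): `t ≺ x_1 ≺ x_2 ≺ ⋯`. -/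
def optLt : Option ℕ → Option ℕ → Prop
  | none, some _ => True
  | some i, some j => i < j
  | _, none => False

/-- The graded right lexicographic ordering on words: first compare lengths, then compare
letter by letter from the right. -/
def grRightLex {Y : Type*} (lt : Y → Y → Prop) (dflt : Y) (m n : FreeMonoid Y) : Prop :=
  FreeMonoid.length m < FreeMonoid.length n ∨
  (FreeMonoid.length m = FreeMonoid.length n ∧
    ∃ t < FreeMonoid.length m,
      lt ((FreeMonoid.toList m).getD t dflt) ((FreeMonoid.toList n).getD t dflt) ∧
      ∀ s, t < s → (FreeMonoid.toList m).getD s dflt = (FreeMonoid.toList n).getD s dflt)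

end

/-! ### Auxiliary development -/

noncomputable section Aux

open MvPolynomial

/-- Place `n+1`. -/
def pp (n : ℕ) : ℕ+ := ⟨n + 1, Nat.succ_pos n⟩

@[simp] lemma pp_coe (n : ℕ) : ((pp n : ℕ+) : ℕ) = n + 1 := rfl

lemma pp_eq_iff {n : ℕ} {j : ℕ+} : pp n = j ↔ (j : ℕ) = n + 1 := by
  constructor
  · rintro rfl; rfl
  · intro h; exact PNat.coe_injective (by simpa using h.symm)

/-- The indicator multidegree of places `a+1, …, b`. -/
def chi (a b : ℕ) : ℕ+ →₀ ℕ := ∑ k ∈ Finset.range (b - a), Finsupp.single (pp (a + k)) 1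

lemma chi_apply (a b : ℕ) (j : ℕ+) :
    chi a b j = if a < (j : ℕ) ∧ (j : ℕ) ≤ b then 1 else 0 := by
  classical
  unfold chi
  rw [Finset.sum_apply']
  by_cases h : a < (j : ℕ) ∧ (j : ℕ) ≤ b
  · rw [if_pos h]
    rw [Finset.sum_eq_single ((j : ℕ) - a - 1)]
    · rw [Finsupp.single_apply, if_pos (pp_eq_iff.mpr (by omega))]
    · intro k hk hne
      rw [Finsupp.single_apply, if_neg]
      intro he
      exact hne (by have := pp_eq_iff.mp he; omega)
    · intro hmem
      simp only [Finset.mem_range] at hmem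
      omega
  · rw [if_neg h, Finset.sum_eq_zero]
    intro k hk
    simp only [Finset.mem_range] at hk
    rw [Finsupp.single_apply, if_neg]
    intro he
    have := pp_eq_iff.mp he
    omega

lemma chi_self (a : ℕ) : chi a a = 0 := by
  unfold chi; simp

lemma placeDeg_add {Y : Type*} (m n : (Y × ℕ+) →₀ ℕ) :
    placeDeg (m + n) = placeDeg m + placeDeg n := Finsupp.mapDomain_add

@[simp] lemma placeDeg_single {Y : Type*} (y : Y) (j : ℕ+) (e : ℕ) :
    placeDeg (Finsupp.single (y, j) e) = Finsupp.single j e := Finsupp.mapDomain_single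

@[simp] lemma placeDeg_zero {Y : Type*} : placeDeg (0 : (Y × ℕ+) →₀ ℕ) = 0 :=
  Finsupp.mapDomain_zero

lemma placeDeg_apply {Y : Type*} (m : (Y × ℕ+) →₀ ℕ) (j : ℕ+) :
    placeDeg m j = m.sum (fun p c => if p.2 = j then c else 0) := by
  classical
  unfold placeDeg Finsupp.mapDomain
  rw [Finsupp.sum_apply]
  exact Finsupp.sum_congr (fun p _ => Finsupp.single_apply)

lemma placeDeg_pos {Y : Type*} {m : (Y × ℕ+) →₀ ℕ} {j : ℕ+} (h : 0 < placeDeg m j) :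
    ∃ y, 0 < m (y, j) := by
  classical
  by_contra hc
  push_neg at hc
  rw [placeDeg_apply] at h
  rw [Finsupp.sum, Finset.sum_eq_zero] at h
  · exact lt_irrefl 0 h
  · intro p hp
    by_cases h2 : p.2 = j
    · rw [if_pos h2]
      have := hc p.1
      rw [← h2] at this
      simpa using this
    · rw [if_neg h2]

lemma placeDeg_sum_eq {Y : Type*} (m : (Y × ℕ+) →₀ ℕ) :
    (placeDeg m).sum (fun _ e => e) = m.sum (fun _ e => e) := by
  unfold placeDeg
  exact Finsupp.sum_mapDomain_index (fun _ => rfl) (fun _ _ _ => rfl)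

lemma chi_sum (a b : ℕ) : (chi a b).sum (fun _ e => e) = b - a := by
  unfold chi
  rw [← Finsupp.sum_finset_sum_index (fun _ => rfl) (fun _ _ _ => rfl)]
  simp [Finsupp.sum_single_index]

lemma placeDeg_eq_zero {Y : Type*} {m : (Y × ℕ+) →₀ ℕ} (h : placeDeg m = 0) : m = 0 := by
  classical
  by_contra hm
  obtain ⟨p, hp⟩ := Finsupp.ne_iff.mp hm
  simp only [Finsupp.coe_zero, Pi.zero_apply] at hp
  have hle : m p ≤ placeDeg m p.2 := by
    rw [placeDeg_apply, Finsupp.sum]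
    have hmem : p ∈ m.support := Finsupp.mem_support_iff.mpr hp
    calc m p = (if p.2 = p.2 then m p else 0) := by simp
      _ ≤ ∑ q ∈ m.support, (if q.2 = p.2 then m q else 0) :=
        Finset.single_le_sum (f := fun q => if q.2 = p.2 then m q else 0) (fun q _ => Nat.zero_le _) hmem
  rw [h] at hle
  simp only [Finsupp.coe_zero, Pi.zero_apply, Nat.le_zero] at hle
  exact hp hle

end Aux

section Aux2
open MvPolynomial

variable (K : Type*) [Field K]

lemma shiftVar_injective {Y : Type*} (k : ℕ) : Function.Injective (shiftVar (Y := Y) k) := by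
  rintro ⟨y, j⟩ ⟨y', j'⟩ h
  have h1 := congrArg Prod.fst h
  have h2 := congrArg (fun p => ((p.2 : ℕ+) : ℕ)) h
  simp only [shiftVar] at h1 h2
  have : (j : ℕ) = (j' : ℕ) := by
    exact Nat.add_right_cancel (m := k) h2
  exact Prod.ext h1 (PNat.coe_injective this)

lemma shift_shift {Y : Type*} (k k' : ℕ) (f : PL K Y) :
    shift K k (shift K k' f) = shift K (k' + k) f := by
  unfold shift
  rw [MvPolynomial.rename_rename]
  have : shiftVar (Y := Y) k ∘ shiftVar k' = shiftVar (k' + k) := by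
    funext p
    simp only [Function.comp_apply, shiftVar]
    exact Prod.ext rfl (PNat.coe_injective (Nat.add_assoc (p.2 : ℕ) k' k))
  rw [this]

lemma shift_zero_eq {Y : Type*} (f : PL K Y) : shift K 0 f = f := by
  unfold shift
  have : shiftVar (Y := Y) 0 = id := by
    funext p
    exact Prod.ext rfl (PNat.coe_injective (by simp [shiftVar]))
  rw [this, MvPolynomial.rename_id]
  rfl

lemma mem_nspan_self {Y : Type*} {S : Set (PL K Y)} {f : PL K Y} (hf : f ∈ S) :
    f ∈ nspan K S :=
  Ideal.subset_span ⟨0, f, hf, (shift_zero_eq K f).symm⟩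

lemma nspan_mono {Y : Type*} {S T : Set (PL K Y)} (h : S ⊆ T) : nspan K S ≤ nspan K T :=
  Ideal.span_mono (fun g => by rintro ⟨k, f, hf, rfl⟩; exact ⟨k, f, h hf, rfl⟩)

lemma shift_mem_of_mem_span {Y : Type*} {G : Set (PL K Y)} (k : ℕ)
    (hG : ∀ g ∈ G, shift K k g ∈ Ideal.span G) :
    ∀ f ∈ Ideal.span G, shift K k f ∈ Ideal.span G := by
  intro f hf
  induction hf using Submodule.span_induction with
  | mem g hg => exact hG g hg
  | zero => simpa using Ideal.zero_mem (Ideal.span G)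
  | add a b _ _ ha hb => rw [map_add]; exact Ideal.add_mem _ ha hb
  | smul a b _ hb => rw [smul_eq_mul, map_mul]; exact Ideal.mul_mem_left _ _ hb

lemma isNIdeal_nspan {Y : Type*} (S : Set (PL K Y)) : IsNIdeal K (nspan K S) := by
  intro k f hf
  refine shift_mem_of_mem_span K k ?_ f hf
  rintro g ⟨k', f', hf', rfl⟩
  rw [shift_shift]
  exact Ideal.subset_span ⟨k' + k, f', hf', rfl⟩

lemma nspan_le {Y : Type*} {S : Set (PL K Y)} {I : Ideal (PL K Y)}
    (hI : IsNIdeal K I) (hS : S ⊆ I) : nspan K S ≤ I := by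
  rw [nspan, Ideal.span_le]
  rintro g ⟨k, f, hf, rfl⟩
  exact hI k f (hS hf)

/-! tProd lemmas -/

lemma tProd_self (X : Type*) (d : ℕ) : tProd K X d d = 1 := by
  unfold tProd; simp

lemma tProd_congr (X : Type*) {a b a' b' : ℕ} (h1 : a = a') (h2 : b = b') :
    tProd K X a b = tProd K X a' b' := by rw [h1, h2]

lemma tProd_split (X : Type*) {a b c : ℕ} (hab : a ≤ b) (hbc : b ≤ c) :
    tProd K X a c = tProd K X a b * tProd K X b c := by
  unfold tProd
  have : c - a = (b - a) + (c - b) := by omega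
  rw [this, Finset.prod_range_add]
  congr 1
  refine Finset.prod_congr rfl (fun k _ => ?_)
  congr 1
  exact Prod.ext rfl (PNat.coe_injective (by simp; omega))

lemma tProd_cons (X : Type*) {a b : ℕ} (h : a < b) :
    tProd K X a b = MvPolynomial.X ((none : Option X), pp a) * tProd K X (a + 1) b := by
  rw [tProd_split K X (Nat.le_succ a) h]
  congr 1
  unfold tProd
  have : a + 1 - a = 1 := by omega
  rw [this]
  simp only [Finset.prod_range_one, Nat.add_zero]
  rfl

lemma shift_X {Y : Type*} (k : ℕ) (p : Y × ℕ+) :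
    shift K k (MvPolynomial.X p) = MvPolynomial.X (shiftVar k p) :=
  MvPolynomial.rename_X _ _

lemma shift_tProd (X : Type*) (k d d' : ℕ) :
    shift K k (tProd K X d d') = tProd K X (d + k) (d' + k) := by
  unfold tProd
  rw [map_prod]
  have : d' + k - (d + k) = d' - d := by omega
  rw [this]
  refine Finset.prod_congr rfl (fun j _ => ?_)
  rw [shift_X]
  congr 1
  exact Prod.ext rfl (PNat.coe_injective (by simp [shiftVar]; omega))

end Aux2

section Aux3
open MvPolynomial

variable (K : Type*) [Field K]

lemma mComp_coeff {Y : Type*} (μ : ℕ+ →₀ ℕ) (f : PL K Y) (n : (Y × ℕ+) →₀ ℕ) :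
    MvPolynomial.coeff n (mComp K μ f) = if placeDeg n = μ then MvPolynomial.coeff n f else 0 := by
  classical
  unfold mComp
  rw [MvPolynomial.coeff_sum]
  have : ∀ m ∈ f.support.filter (fun m => placeDeg m = μ),
      MvPolynomial.coeff n (MvPolynomial.monomial m (MvPolynomial.coeff m f)) =
        if m = n then MvPolynomial.coeff m f else 0 :=
    fun m _ => MvPolynomial.coeff_monomial n m _
  rw [Finset.sum_congr rfl this, Finset.sum_ite_eq' _ n (fun m => MvPolynomial.coeff m f)]
  by_cases hn : placeDeg n = μ
  · rw [if_pos hn]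
    by_cases h0 : MvPolynomial.coeff n f = 0
    · simp [h0]
    · rw [if_pos]
      simp [MvPolynomial.mem_support_iff, h0, hn]
  · rw [if_neg hn, if_neg]
    simp only [Finset.mem_filter, MvPolynomial.mem_support_iff, not_and]
    exact fun _ => hn

lemma mComp_zero {Y : Type*} (μ : ℕ+ →₀ ℕ) : mComp K μ (0 : PL K Y) = 0 := by
  apply MvPolynomial.ext
  intro n
  rw [mComp_coeff]
  simp

lemma mComp_add {Y : Type*} (μ : ℕ+ →₀ ℕ) (f g : PL K Y) :
    mComp K μ (f + g) = mComp K μ f + mComp K μ g := by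
  apply MvPolynomial.ext
  intro n
  rw [MvPolynomial.coeff_add, mComp_coeff, mComp_coeff, mComp_coeff, MvPolynomial.coeff_add]
  by_cases hn : placeDeg n = μ <;> simp [hn]

lemma mComp_sum {Y : Type*} {ι : Type*} (μ : ℕ+ →₀ ℕ) (s : Finset ι) (g : ι → PL K Y) :
    mComp K μ (∑ i ∈ s, g i) = ∑ i ∈ s, mComp K μ (g i) := by
  classical
  induction s using Finset.induction with
  | empty => simp [mComp_zero]
  | insert a s' hne ih =>
                     rw [Finset.sum_insert hne, Finset.sum_insert hne, mComp_add, ih]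

lemma mComp_of_isMultiHomog {Y : Type*} {μ : ℕ+ →₀ ℕ} {f : PL K Y}
    (h : IsMultiHomog K μ f) : mComp K μ f = f := by
  apply MvPolynomial.ext
  intro n
  rw [mComp_coeff]
  by_cases hn : placeDeg n = μ
  · rw [if_pos hn]
  · rw [if_neg hn]
    by_contra h0
    exact hn (h n (MvPolynomial.mem_support_iff.mpr (fun hc => h0 hc.symm)))

lemma mComp_of_ne {Y : Type*} {μ ν : ℕ+ →₀ ℕ} {f : PL K Y}
    (h : IsMultiHomog K ν f) (hne : ν ≠ μ) : mComp K μ f = 0 := by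
  apply MvPolynomial.ext
  intro n
  rw [mComp_coeff, MvPolynomial.coeff_zero]
  by_cases hn : placeDeg n = μ
  · rw [if_pos hn]
    by_contra h0
    exact hne ((h n (MvPolynomial.mem_support_iff.mpr (fun hc => h0 hc))) ▸ hn)
  · rw [if_neg hn]

lemma isMultiHomog_mul {Y : Type*} {μ ν : ℕ+ →₀ ℕ} {f g : PL K Y}
    (hf : IsMultiHomog K μ f) (hg : IsMultiHomog K ν g) :
    IsMultiHomog K (μ + ν) (f * g) := by
  classical
  intro m hm
  have := MvPolynomial.support_mul f g hm
  rw [Finset.mem_add] at this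
  obtain ⟨a, ha, b, hb, rfl⟩ := this
  rw [placeDeg_add, hf a ha, hg b hb]

lemma isMultiHomog_monomial {Y : Type*} (m : (Y × ℕ+) →₀ ℕ) (c : K) :
    IsMultiHomog K (placeDeg m) (MvPolynomial.monomial m c) := by
  intro n hn
  have := MvPolynomial.support_monomial_subset hn
  simp only [Finset.mem_singleton] at this
  rw [this]

lemma isMultiHomog_X {Y : Type*} (y : Y) (j : ℕ+) :
    IsMultiHomog K (Finsupp.single j 1) (MvPolynomial.X (R := K) (y, j)) := by
  intro n hn
  rw [MvPolynomial.support_X, Finset.mem_singleton] at hn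
  rw [hn]
  exact placeDeg_single y j 1

lemma isMultiHomog_shift {Y : Type*} {μ : ℕ+ →₀ ℕ} {f : PL K Y} (k : ℕ)
    (h : IsMultiHomog K μ f) :
    IsMultiHomog K (Finsupp.mapDomain (fun j : ℕ+ => (⟨j + k, Nat.add_pos_left j.2 k⟩ : ℕ+)) μ)
      (shift K k f) := by
  classical
  intro m hm
  unfold shift at hm
  rw [MvPolynomial.support_rename_of_injective (shiftVar_injective k), Finset.mem_image] at hm
  obtain ⟨n, hn, rfl⟩ := hm
  unfold placeDeg
  rw [← Finsupp.mapDomain_comp]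
  have hcomp : (Prod.snd ∘ shiftVar (Y := Y) k) =
      (fun j : ℕ+ => (⟨j + k, Nat.add_pos_left j.2 k⟩ : ℕ+)) ∘ Prod.snd := rfl
  rw [hcomp, ← h n hn]
  exact Finsupp.mapDomain_comp

lemma mapDomain_chi (k a b : ℕ) :
    Finsupp.mapDomain (fun j : ℕ+ => (⟨j + k, Nat.add_pos_left j.2 k⟩ : ℕ+)) (chi a b) =
      chi (a + k) (b + k) := by
  unfold chi
  rw [Finsupp.mapDomain_finset_sum]
  have : b + k - (a + k) = b - a := by omega
  rw [this]
  refine Finset.sum_congr rfl (fun j _ => ?_)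
  rw [Finsupp.mapDomain_single]
  congr 1
  exact PNat.coe_injective (by simp; omega)

end Aux3

section Aux4
open MvPolynomial

variable (K : Type*) [Field K]

lemma single_mk_apply (n : ℕ) (j : ℕ+) :
    (Finsupp.single (⟨n + 1, Nat.succ_pos n⟩ : ℕ+) (1 : ℕ)) j = if (j : ℕ) = n + 1 then 1 else 0 := by
  show (Finsupp.single (pp n) 1 : ℕ+ →₀ ℕ) j = _
  rw [Finsupp.single_apply]
  by_cases hc : (j : ℕ) = n + 1
  · rw [if_pos hc, if_pos (PNat.coe_injective (by simpa using hc.symm))]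
  · rw [if_neg hc, if_neg (fun he => hc (by simpa using congrArg (fun x : ℕ+ => (x : ℕ)) he.symm))]

lemma placeDeg_wordExpAux {Y : Type*} (l : List Y) :
    ∀ n, placeDeg (wordExpAux (Y := Y) n l) = chi n (n + l.length) := by
  induction l with
  | nil => intro n; simp [wordExpAux, chi_self]
  | cons y w ih =>
      intro n
      change placeDeg (Finsupp.single (y, pp n) 1 + wordExpAux (n + 1) w) = _
      rw [placeDeg_add, placeDeg_single, ih (n + 1)]
      apply Finsupp.ext
      intro j
      rw [Finsupp.add_apply, Finsupp.single_apply, chi_apply, chi_apply]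
      simp only [List.length_cons]
      by_cases he : (j : ℕ) = n + 1
      · rw [if_pos (pp_eq_iff.mpr he),
          if_neg (by omega), if_pos (by omega)]
      · rw [if_neg (fun hh => he (pp_eq_iff.mp hh))]
        by_cases h2 : n + 1 < (j : ℕ) ∧ (j : ℕ) ≤ n + 1 + w.length
        · rw [if_pos h2, if_pos (by omega)]
        · rw [if_neg h2, if_neg (by omega)]

lemma placeDeg_wordExp {Y : Type*} (w : FreeMonoid Y) :
    placeDeg (wordExp w) = chi 0 (FreeMonoid.toList w).length := by
  unfold wordExp
  rw [placeDeg_wordExpAux, Nat.zero_add]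

lemma lset_struct {Y : Type*} {f : PL K Y} (hf : f ∈ Lset K) (h0 : f ≠ 0) :
    IsMultiHomog K (chi 0 (MvPolynomial.totalDegree f)) f := by
  classical
  obtain ⟨⟨g, rfl⟩, μ, hμ⟩ := hf
  have hsupp : ∀ m ∈ (iota K g).support, ∃ w : FreeMonoid Y, m = wordExp w := by
    intro m hm
    unfold iota at hm
    rw [Finsupp.sum] at hm
    have := MvPolynomial.support_sum hm
    rw [Finset.mem_biUnion] at this
    obtain ⟨w, _, hw⟩ := this
    have := MvPolynomial.support_monomial_subset hw
    rw [Finset.mem_singleton] at this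
    exact ⟨w, this⟩
  obtain ⟨m₀, hm₀⟩ := (MvPolynomial.ne_zero_iff.mp h0)
  have hm₀s : m₀ ∈ (iota K g).support := MvPolynomial.mem_support_iff.mpr hm₀
  obtain ⟨w₀, hw₀⟩ := hsupp m₀ hm₀s
  set ℓ := (FreeMonoid.toList w₀).length with hℓ
  have hμchi : μ = chi 0 ℓ := by
    rw [← hμ m₀ hm₀s, hw₀, placeDeg_wordExp, hℓ]
  have hdeg : ∀ m ∈ (iota K g).support, (m.sum fun _ e => e) = ℓ := by
    intro m hm
    rw [← placeDeg_sum_eq, hμ m hm, hμchi, chi_sum]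
    omega
  have htd : MvPolynomial.totalDegree (iota K g) = ℓ := by
    unfold MvPolynomial.totalDegree
    apply le_antisymm
    · exact Finset.sup_le (fun m hm => le_of_eq (hdeg m hm))
    · exact le_trans (le_of_eq (hdeg m₀ hm₀s).symm)
        (Finset.le_sup (f := fun s => s.sum fun _ e => e) hm₀s)
  rw [htd, ← hμchi]
  exact hμ

end Aux4

section Aux5
open MvPolynomial

variable {K : Type*} [Field K] {X : Type*} {J : Ideal (PL K (Option X))}

lemma basic_rel (hD : Did K X ≤ J) (x : X) (j : ℕ) :
    MvPolynomial.X ((some x : Option X), pp j) * MvPolynomial.X ((none : Option X), pp (j + 1)) -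
      MvPolynomial.X ((none : Option X), pp j) * MvPolynomial.X ((some x : Option X), pp (j + 1))
      ∈ J := by
  apply hD
  have hg : (MvPolynomial.X ((some x : Option X), (1 : ℕ+)) *
      MvPolynomial.X ((none : Option X), (2 : ℕ+)) -
      MvPolynomial.X ((none : Option X), (1 : ℕ+)) *
      MvPolynomial.X ((some x : Option X), (2 : ℕ+))) ∈ Dgens K X := ⟨x, rfl⟩
  have hmem : shift K j (MvPolynomial.X ((some x : Option X), (1 : ℕ+)) *
      MvPolynomial.X ((none : Option X), (2 : ℕ+)) -
      MvPolynomial.X ((none : Option X), (1 : ℕ+)) *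
      MvPolynomial.X ((some x : Option X), (2 : ℕ+))) ∈ Did K X :=
    Ideal.subset_span ⟨j, _, hg, rfl⟩
  have he1 : shiftVar (Y := Option X) j ((some x : Option X), (1 : ℕ+)) = ((some x), pp j) :=
    Prod.ext rfl (PNat.coe_injective (by simp [shiftVar]; omega))
  have he2 : shiftVar (Y := Option X) j ((none : Option X), (1 : ℕ+)) = (none, pp j) :=
    Prod.ext rfl (PNat.coe_injective (by simp [shiftVar]; omega))
  have he3 : shiftVar (Y := Option X) j ((some x : Option X), (2 : ℕ+)) = ((some x), pp (j + 1)) :=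
    Prod.ext rfl (PNat.coe_injective (by simp [shiftVar]; omega))
  have he4 : shiftVar (Y := Option X) j ((none : Option X), (2 : ℕ+)) = (none, pp (j + 1)) :=
    Prod.ext rfl (PNat.coe_injective (by simp [shiftVar]; omega))
  rwa [map_sub, map_mul, map_mul, shift_X, shift_X, shift_X, shift_X, he1, he2, he3, he4] at hmem

lemma y_rel (hD : Did K X ≤ J) (y : Option X) (j : ℕ) :
    MvPolynomial.X (y, pp j) * MvPolynomial.X ((none : Option X), pp (j + 1)) -
      MvPolynomial.X ((none : Option X), pp j) * MvPolynomial.X (y, pp (j + 1)) ∈ J := by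
  cases y with
  | none => rw [mul_comm]; rw [sub_self]; exact J.zero_mem
  | some x => exact basic_rel hD x j

/-- Moving a letter to the right through a block of `t`'s, modulo `J`. -/
lemma move_rel (hD : Did K X ≤ J) (y : Option X) (q : PL K (Option X)) :
    ∀ r p, MvPolynomial.X (y, pp p) * tProd K X (p + 1) (p + 1 + r) * q -
      tProd K X p (p + r) * MvPolynomial.X (y, pp (p + r)) * q ∈ J := by
  intro r
  induction r with
  | zero =>
      intro p
      simp only [Nat.add_zero, tProd_self, mul_one, one_mul]
      rw [sub_self]
      exact J.zero_mem
  | succ r ih =>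
      intro p
      have h1 : tProd K X (p + 1) (p + 1 + (r + 1)) =
          MvPolynomial.X ((none : Option X), pp (p + 1)) * tProd K X (p + 2) (p + 2 + r) := by
        rw [tProd_cons K X (by omega)]
        exact congrArg _ (tProd_congr K X rfl (by omega))
      have h2 : tProd K X p (p + (r + 1)) =
          MvPolynomial.X ((none : Option X), pp p) * tProd K X (p + 1) (p + 1 + r) := by
        rw [tProd_cons K X (by omega)]
        exact congrArg _ (tProd_congr K X rfl (by omega))
      have step1 : MvPolynomial.X (y, pp p) * tProd K X (p + 1) (p + 1 + (r + 1)) * q -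
          MvPolynomial.X ((none : Option X), pp p) *
            (MvPolynomial.X (y, pp (p + 1)) * tProd K X (p + 2) (p + 2 + r) * q) ∈ J := by
        have := Ideal.mul_mem_left J (tProd K X (p + 2) (p + 2 + r) * q) (y_rel hD y p)
        have heq : (tProd K X (p + 2) (p + 2 + r) * q) *
            (MvPolynomial.X (y, pp p) * MvPolynomial.X ((none : Option X), pp (p + 1)) -
              MvPolynomial.X ((none : Option X), pp p) * MvPolynomial.X (y, pp (p + 1))) =
            MvPolynomial.X (y, pp p) * tProd K X (p + 1) (p + 1 + (r + 1)) * q -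
            MvPolynomial.X ((none : Option X), pp p) *
              (MvPolynomial.X (y, pp (p + 1)) * tProd K X (p + 2) (p + 2 + r) * q) := by
          rw [h1]; ring
        rwa [heq] at this
      have step2 : MvPolynomial.X ((none : Option X), pp p) *
          (MvPolynomial.X (y, pp (p + 1)) * tProd K X (p + 2) (p + 2 + r) * q) -
          MvPolynomial.X ((none : Option X), pp p) *
          (tProd K X (p + 1) (p + 1 + r) * MvPolynomial.X (y, pp (p + 1 + r)) * q) ∈ J := by
        have := Ideal.mul_mem_left J (MvPolynomial.X ((none : Option X), pp p)) (ih (p + 1))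
        have heq : MvPolynomial.X ((none : Option X), pp p) *
            (MvPolynomial.X (y, pp (p + 1)) * tProd K X (p + 1 + 1) (p + 1 + 1 + r) * q -
              tProd K X (p + 1) (p + 1 + r) * MvPolynomial.X (y, pp (p + 1 + r)) * q) =
            MvPolynomial.X ((none : Option X), pp p) *
            (MvPolynomial.X (y, pp (p + 1)) * tProd K X (p + 2) (p + 2 + r) * q) -
            MvPolynomial.X ((none : Option X), pp p) *
            (tProd K X (p + 1) (p + 1 + r) * MvPolynomial.X (y, pp (p + 1 + r)) * q) := by
          rw [show p + 1 + 1 = p + 2 from rfl, show p + 2 + r = p + 2 + r from rfl]; ring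
        rwa [heq] at this
      have hfinal : MvPolynomial.X ((none : Option X), pp p) *
          (tProd K X (p + 1) (p + 1 + r) * MvPolynomial.X (y, pp (p + 1 + r)) * q) =
          tProd K X p (p + (r + 1)) * MvPolynomial.X (y, pp (p + (r + 1))) * q := by
        rw [h2, show p + 1 + r = p + (r + 1) from by omega]; ring
      have := J.add_mem step1 step2
      rw [sub_add_sub_cancel, hfinal] at this
      exact this

end Aux5

section Aux6
open MvPolynomial

variable {K : Type*} [Field K] {X : Type*} {J : Ideal (PL K (Option X))}

lemma X_eq_monomial {σ R : Type*} [CommRing R] (p : σ) :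
    (MvPolynomial.X p : MvPolynomial σ R) = MvPolynomial.monomial (Finsupp.single p 1) 1 := rfl

lemma extract_top {Y : Type*} {m : (Y × ℕ+) →₀ ℕ} {j : ℕ+} (h : 0 < placeDeg m j) :
    ∃ (y : Y) (m' : (Y × ℕ+) →₀ ℕ), m = Finsupp.single (y, j) 1 + m' ∧
      placeDeg m = Finsupp.single j 1 + placeDeg m' := by
  classical
  obtain ⟨y, hy⟩ := placeDeg_pos h
  have hsplit : m = Finsupp.single (y, j) 1 + (m - Finsupp.single (y, j) 1) := by
    apply Finsupp.ext; intro p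
    rw [Finsupp.add_apply, Finsupp.tsub_apply, Finsupp.single_apply]
    by_cases hp : (y, j) = p
    · subst hp
      rw [if_pos rfl]
      omega
    · rw [if_neg hp]
      omega
  refine ⟨y, m - Finsupp.single (y, j) 1, hsplit, ?_⟩
  conv_lhs => rw [hsplit]
  rw [placeDeg_add, placeDeg_single]

lemma sweep (hD : Did K X ≤ J) (a r : ℕ) :
    ∀ (s : ℕ) (q : PL K (Option X)), tProd K X a (a + r) * q ∈ J →
    ∀ (m : (Option X × ℕ+) →₀ ℕ) (ν : ℕ+ →₀ ℕ),
      (∀ j : ℕ+, a < (j : ℕ) → ν j = 0) →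
      placeDeg m = ν + chi a (a + s) →
      tProd K X (a + s) (a + s + r) * MvPolynomial.monomial m (1 : K) * q ∈ J := by
  intro s
  induction s with
  | zero =>
      intro q hq m ν hν hm
      simp only [Nat.add_zero]
      have := Ideal.mul_mem_left J (MvPolynomial.monomial m (1 : K)) hq
      rwa [show MvPolynomial.monomial m (1 : K) * (tProd K X a (a + r) * q) =
          tProd K X a (a + r) * MvPolynomial.monomial m 1 * q from by ring] at this
  | succ s ih =>
      intro q hq m ν hν hm
      have h1 : placeDeg m (pp (a + s)) = 1 := by
        have hj := DFunLike.congr_fun hm (pp (a + s))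
        rw [Finsupp.add_apply, chi_apply, hν (pp (a + s)) (by simp only [pp_coe]; omega), if_pos (by simp only [pp_coe]; omega)] at hj
        simpa using hj
      obtain ⟨y, m', hsplit, hpd⟩ := extract_top (by omega : 0 < placeDeg m (pp (a + s)))
      have hm' : placeDeg m' = ν + chi a (a + s) := by
        apply Finsupp.ext; intro j
        have hj := DFunLike.congr_fun hm j
        have hj2 := DFunLike.congr_fun hpd j
        rw [Finsupp.add_apply, chi_apply] at hj
        rw [Finsupp.add_apply, Finsupp.single_apply] at hj2
        rw [Finsupp.add_apply, chi_apply]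
        by_cases hc : pp (a + s) = j
        · have hcn : (j : ℕ) = a + s + 1 := pp_eq_iff.mp hc
          rw [if_pos hc] at hj2
          rw [hν j (by omega)] at hj ⊢
          rw [if_pos (by omega)] at hj
          rw [if_neg (by omega)]
          omega
        · have hcn : (j : ℕ) ≠ a + s + 1 := fun h => hc (pp_eq_iff.mpr h)
          rw [if_neg hc] at hj2
          by_cases h2 : a < (j : ℕ) ∧ (j : ℕ) ≤ a + s
          · rw [if_pos (by omega)] at hj
            rw [if_pos h2]
            omega
          · rw [if_neg (by omega)] at hj
            rw [if_neg h2]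
            omega
      have hmono : (MvPolynomial.monomial m (1 : K)) =
          MvPolynomial.X (y, pp (a + s)) * MvPolynomial.monomial m' 1 := by
        rw [X_eq_monomial, MvPolynomial.monomial_mul, one_mul, ← hsplit]
      have hmv := move_rel hD y q r (a + s)
      have hB : MvPolynomial.monomial m' (1 : K) *
          (tProd K X (a + s) (a + s + r) * MvPolynomial.X (y, pp (a + s + r)) * q) ∈ J := by
        have hq' : tProd K X a (a + r) * (MvPolynomial.X (y, pp (a + s + r)) * q) ∈ J := by
          rw [mul_left_comm]
          exact Ideal.mul_mem_left _ _ hq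
        have := ih (MvPolynomial.X (y, pp (a + s + r)) * q) hq' m' ν hν hm'
        rwa [show MvPolynomial.monomial m' (1 : K) *
            (tProd K X (a + s) (a + s + r) * MvPolynomial.X (y, pp (a + s + r)) * q) =
            tProd K X (a + s) (a + s + r) * MvPolynomial.monomial m' 1 *
              (MvPolynomial.X (y, pp (a + s + r)) * q) from by ring]
      have hsum := J.add_mem (Ideal.mul_mem_left J (MvPolynomial.monomial m' (1 : K)) hmv) hB
      rwa [show MvPolynomial.monomial m' (1 : K) *
          (MvPolynomial.X (y, pp (a + s)) * tProd K X (a + s + 1) (a + s + 1 + r) * q -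
            tProd K X (a + s) (a + s + r) * MvPolynomial.X (y, pp (a + s + r)) * q) +
          MvPolynomial.monomial m' (1 : K) *
          (tProd K X (a + s) (a + s + r) * MvPolynomial.X (y, pp (a + s + r)) * q) =
          tProd K X (a + (s + 1)) (a + (s + 1) + r) * MvPolynomial.monomial m 1 * q from by
        rw [hmono, show a + (s + 1) = a + s + 1 from rfl]; ring] at hsum

end Aux6

section Aux7
open MvPolynomial

variable {K : Type*} [Field K] {X : Type*} {J : Ideal (PL K (Option X))}

lemma eq_C_of_multiHomog_zero {Y : Type*} {f : PL K Y}
    (h : IsMultiHomog K 0 f) : f = MvPolynomial.C (MvPolynomial.coeff 0 f) := by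
  classical
  apply MvPolynomial.ext
  intro n
  rw [MvPolynomial.coeff_C]
  by_cases hn : n = 0
  · rw [if_pos hn.symm, hn]
  · rw [if_neg (fun hc => hn hc.symm)]
    by_contra hc
    exact hn (placeDeg_eq_zero (h n (MvPolynomial.mem_support_iff.mpr hc)))

lemma per_term (hJN : IsNIdeal K J) (hD : Did K X ≤ J) (e : ℕ)
    {f' : PL K (Option X)} (hf'L : f' ∈ Lset K) {d' : ℕ}
    (hd' : MvPolynomial.totalDegree f' ≤ d')
    (hfJ : tProd K X (MvPolynomial.totalDegree f') d' * f' ∈ J)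
    (k : ℕ) (m : (Option X × ℕ+) →₀ ℕ) (c : K)
    (hdeg : placeDeg m + chi k (k + MvPolynomial.totalDegree f') = chi 0 e) :
    ∃ E, tProd K X e (e + E) * (MvPolynomial.monomial m c * shift K k f') ∈ J := by
  classical
  by_cases hf0 : f' = 0
  · exact ⟨0, by rw [hf0, map_zero, mul_zero, mul_zero]; exact J.zero_mem⟩
  set d₀ := MvPolynomial.totalDegree f' with hd₀
  set r := d' - d₀ with hr
  have hhom : IsMultiHomog K (chi 0 d₀) f' := lset_struct K hf'L hf0
  have hqJ : tProd K X (k + d₀) (k + d₀ + r) * shift K k f' ∈ J := by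
    have := hJN k _ hfJ
    rw [map_mul, shift_tProd] at this
    rwa [tProd_congr K X (show d₀ + k = k + d₀ from by omega)
      (show d' + k = k + d₀ + r from by omega)] at this
  by_cases hae : k + d₀ ≤ e
  · set ν : ℕ+ →₀ ℕ := placeDeg m - chi (k + d₀) e with hν_def
    have hpt : ∀ j : ℕ+, placeDeg m j + chi k (k + d₀) j = chi 0 e j := by
      intro j
      have := DFunLike.congr_fun hdeg j
      rwa [Finsupp.add_apply] at this
    have hν : ∀ j : ℕ+, k + d₀ < (j : ℕ) → ν j = 0 := by
      intro j hj
      rw [hν_def, Finsupp.tsub_apply]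
      have := hpt j
      rw [chi_apply, chi_apply, if_neg (by omega)] at this
      rw [chi_apply]
      by_cases h2 : (j : ℕ) ≤ e
      · rw [if_pos (by omega)]
        rw [if_pos (by omega)] at this
        omega
      · rw [if_neg (by omega)]
        rw [if_neg (by omega)] at this
        omega
    have hm : placeDeg m = ν + chi (k + d₀) ((k + d₀) + (e - (k + d₀))) := by
      have harg : (k + d₀) + (e - (k + d₀)) = e := by omega
      rw [harg]
      apply Finsupp.ext
      intro j
      rw [Finsupp.add_apply, hν_def, Finsupp.tsub_apply, chi_apply]
      have := hpt j
      rw [chi_apply, chi_apply] at this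
      by_cases h2 : k + d₀ < (j : ℕ) ∧ (j : ℕ) ≤ e
      · rw [if_pos h2]
        rw [if_neg (by omega), if_pos (by omega)] at this
        omega
      · rw [if_neg h2]
        omega
    have := sweep hD (k + d₀) r (e - (k + d₀)) (shift K k f') hqJ m ν hν hm
    rw [tProd_congr K X (show (k + d₀) + (e - (k + d₀)) = e from by omega)
      (show (k + d₀) + (e - (k + d₀)) + r = e + r from by omega)] at this
    refine ⟨r, ?_⟩
    have hc : MvPolynomial.monomial m c = MvPolynomial.C c * MvPolynomial.monomial m 1 := by
      rw [MvPolynomial.C_mul_monomial, mul_one]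
    rw [hc, show tProd K X e (e + r) * (MvPolynomial.C c * MvPolynomial.monomial m 1 *
        shift K k f') = MvPolynomial.C c * (tProd K X e (e + r) * MvPolynomial.monomial m 1 *
        shift K k f') from by ring]
    exact Ideal.mul_mem_left _ _ this
  · -- k + d₀ > e forces d₀ = 0
    have hd00 : d₀ = 0 := by
      by_contra hd0
      have := DFunLike.congr_fun hdeg (pp (k + d₀ - 1))
      rw [Finsupp.add_apply, chi_apply, chi_apply, if_pos (by simp only [pp_coe]; omega),
        if_neg (by simp only [pp_coe]; omega)] at this
      omega
    have hC : f' = MvPolynomial.C (MvPolynomial.coeff 0 f') := by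
      apply eq_C_of_multiHomog_zero
      rw [show (0 : ℕ+ →₀ ℕ) = chi 0 d₀ from by rw [hd00]; exact (chi_self 0).symm]
      exact hhom
    have hshift : ∀ l : ℕ, shift K l f' = f' := by
      intro l
      conv_lhs => rw [hC]
      rw [show shift K l (MvPolynomial.C (MvPolynomial.coeff 0 f')) =
        MvPolynomial.C (MvPolynomial.coeff 0 f') from MvPolynomial.rename_C _ _, ← hC]
    have hJ2 : tProd K X e (e + d') * f' ∈ J := by
      have := hJN e _ hfJ
      rw [map_mul, shift_tProd, hshift e] at this
      rwa [tProd_congr K X (show d₀ + e = e from by omega)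
        (show d' + e = e + d' from by omega)] at this
    refine ⟨d', ?_⟩
    rw [hshift k, show tProd K X e (e + d') * (MvPolynomial.monomial m c * f') =
      MvPolynomial.monomial m c * (tProd K X e (e + d') * f') from by ring]
    exact Ideal.mul_mem_left _ _ hJ2

end Aux7

section Aux8
open MvPolynomial

variable {K : Type*} [Field K] {X : Type*} {J : Ideal (PL K (Option X))}

lemma tExtend {e E E' : ℕ} (hE : E ≤ E') {p : PL K (Option X)}
    (h : tProd K X e (e + E) * p ∈ J) : tProd K X e (e + E') * p ∈ J := by
  rw [tProd_split K X (show e ≤ e + E by omega) (show e + E ≤ e + E' by omega),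
    show tProd K X e (e + E) * tProd K X (e + E) (e + E') * p =
      tProd K X (e + E) (e + E') * (tProd K X e (e + E) * p) from by ring]
  exact Ideal.mul_mem_left _ _ h

lemma exists_tProd_sum {ι : Type*} (e : ℕ) (T : Finset ι) (g : ι → PL K (Option X))
    (h : ∀ i ∈ T, ∃ E, tProd K X e (e + E) * g i ∈ J) :
    ∃ E, tProd K X e (e + E) * (∑ i ∈ T, g i) ∈ J := by
  classical
  induction T using Finset.induction with
  | empty => exact ⟨0, by rw [Finset.sum_empty, mul_zero]; exact J.zero_mem⟩
  | insert a T' hni ih =>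
      obtain ⟨E1, h1⟩ := h a (Finset.mem_insert_self a T')
      obtain ⟨E2, h2⟩ := ih (fun i hi => h i (Finset.mem_insert_of_mem hi))
      refine ⟨max E1 E2, ?_⟩
      rw [Finset.sum_insert hni, mul_add]
      exact J.add_mem (tExtend (le_max_left E1 E2) h1) (tExtend (le_max_right E1 E2) h2)

lemma single_add_chi (d : ℕ) : Finsupp.single (pp d) 1 + chi 0 d = chi 0 (d + 1) := by
  apply Finsupp.ext; intro j
  rw [Finsupp.add_apply, Finsupp.single_apply, chi_apply, chi_apply]
  by_cases hc : pp d = j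
  · have := pp_eq_iff.mp hc
    rw [if_pos hc, if_neg (by omega), if_pos (by omega)]
  · have hcn : (j : ℕ) ≠ d + 1 := fun hx => hc (pp_eq_iff.mpr hx)
    rw [if_neg hc]
    by_cases h2 : 0 < (j : ℕ) ∧ (j : ℕ) ≤ d
    · rw [if_pos h2, if_pos (by omega)]
    · rw [if_neg h2, if_neg (by omega)]

lemma satL_isLSat (hJ : IsLPIdeal K J) (hD : Did K X ≤ J) : IsLSat K (SatL K J) := by
  classical
  have hJN : IsNIdeal K J := hJ.1
  intro f hfL hmem
  by_cases hf0 : f = 0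
  · rw [hf0]; exact (SatL K J).zero_mem
  set d := MvPolynomial.totalDegree f with hd
  have hfh : IsMultiHomog K (chi 0 d) f := lset_struct K hfL hf0
  have hme : MvPolynomial.X ((none : Option X), pp d) * f ∈ SatL K J := hmem
  have hh : IsMultiHomog K (chi 0 (d + 1)) (MvPolynomial.X ((none : Option X), pp d) * f) := by
    have := isMultiHomog_mul K (isMultiHomog_X K (none : Option X) (pp d)) hfh
    rwa [single_add_chi] at this
  have hmem2 : MvPolynomial.X ((none : Option X), pp d) * f ∈
      Submodule.span (PL K (Option X))
        {g | ∃ k, ∃ f' ∈ {f | f ∈ Lset K ∧ ∃ d', MvPolynomial.totalDegree f ≤ d' ∧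
          tProd K X (MvPolynomial.totalDegree f) d' * f ∈ J}, g = shift K k f'} := hme
  rw [Submodule.mem_span_set] at hmem2
  obtain ⟨c, hcsupp, hcsum⟩ := hmem2
  have hXf : MvPolynomial.X ((none : Option X), pp d) * f =
      ∑ p ∈ c.support, mComp K (chi 0 (d + 1)) (c p * p) := by
    conv_lhs => rw [← mComp_of_isMultiHomog K hh, ← hcsum]
    rw [Finsupp.sum, mComp_sum]
    exact Finset.sum_congr rfl (fun p _ => by rw [smul_eq_mul])
  have keyterm : ∀ p ∈ c.support,
      ∃ E, tProd K X (d + 1) ((d + 1) + E) * mComp K (chi 0 (d + 1)) (c p * p) ∈ J := by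
    intro p hp
    obtain ⟨k, f', hf'S, rfl⟩ := hcsupp hp
    obtain ⟨hf'L, d', hd', hf'J⟩ := hf'S
    by_cases hf'0 : f' = 0
    · refine ⟨0, ?_⟩
      rw [hf'0, map_zero, mul_zero, mComp_zero, mul_zero]
      exact J.zero_mem
    · have hhom' := lset_struct K hf'L hf'0
      set d₀ := MvPolynomial.totalDegree f' with hd₀
      have hshifthom : IsMultiHomog K (chi k (k + d₀)) (shift K k f') := by
        have := isMultiHomog_shift K k hhom'
        rw [show chi k (k + d₀) = Finsupp.mapDomain (fun j : ℕ+ => (⟨j + k, Nat.add_pos_left j.2 k⟩ : ℕ+))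
          (chi 0 d₀) from by rw [mapDomain_chi, Nat.zero_add, Nat.add_comm d₀ k]]
        exact this
      have hcp : c (shift K k f') * shift K k f' =
          ∑ m ∈ (c (shift K k f')).support,
            MvPolynomial.monomial m (MvPolynomial.coeff m (c (shift K k f'))) * shift K k f' := by
        rw [← Finset.sum_mul, MvPolynomial.support_sum_monomial_coeff]
      rw [hcp, mComp_sum]
      apply exists_tProd_sum
      intro m hm
      by_cases hμeq : placeDeg m + chi k (k + d₀) = chi 0 (d + 1)
      · have hmh : IsMultiHomog K (chi 0 (d + 1))
            (MvPolynomial.monomial m (MvPolynomial.coeff m (c (shift K k f'))) * shift K k f') := by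
          rw [← hμeq]
          exact isMultiHomog_mul K (isMultiHomog_monomial K m _) hshifthom
        rw [mComp_of_isMultiHomog K hmh]
        exact per_term hJN hD (d + 1) hf'L hd' hf'J k m _ hμeq
      · rw [mComp_of_ne K (isMultiHomog_mul K (isMultiHomog_monomial K m _) hshifthom) hμeq]
        exact ⟨0, by rw [mul_zero]; exact J.zero_mem⟩
  have hEx : ∃ E, tProd K X (d + 1) ((d + 1) + E) *
      (MvPolynomial.X ((none : Option X), pp d) * f) ∈ J := by
    rw [hXf]
    exact exists_tProd_sum _ _ _ keyterm
  obtain ⟨E, hE⟩ := hEx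
  have hfS : f ∈ {f | f ∈ Lset K ∧ ∃ d', MvPolynomial.totalDegree f ≤ d' ∧
      tProd K X (MvPolynomial.totalDegree f) d' * f ∈ J} := by
    refine ⟨hfL, d + 1 + E, by omega, ?_⟩
    rw [← hd, tProd_cons K X (show d < d + 1 + E by omega)]
    rwa [show MvPolynomial.X ((none : Option X), pp d) * tProd K X (d + 1) (d + 1 + E) * f =
      tProd K X (d + 1) ((d + 1) + E) * (MvPolynomial.X ((none : Option X), pp d) * f)
      from by ring]
  exact mem_nspan_self K hfS

end Aux8

section Final
open MvPolynomial

variable {K : Type*} [Field K] {X : Type*}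

lemma psi_tProd (d d' : ℕ) : psi K (tProd K X d d') = 1 := by
  unfold tProd
  rw [map_prod]
  refine Finset.prod_eq_one (fun k _ => ?_)
  unfold psi
  rw [MvPolynomial.aeval_X]
  rfl

theorem statement_7' (K : Type*) [Field K] (X : Type*)
    (J : Ideal (PL K (Option X))) (hJ : IsLPIdeal K J) (hD : Did K X ≤ J) :
    IsLPIdeal K (SatL K J) ∧ IsLSat K (SatL K J) ∧ J ≤ SatL K J ∧ SatL K J ≤ SatP K J := by
  have hNB : IsNIdeal K (SatL K J) := isNIdeal_nspan K _
  refine ⟨⟨hNB, ?_⟩, satL_isLSat hJ hD, ?_, ?_⟩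
  · -- SatL J = nspan (SatL J ∩ Lset)
    refine le_antisymm ?_ ?_
    · apply nspan_mono
      intro f hf
      exact ⟨mem_nspan_self K hf, hf.1⟩
    · exact nspan_le K hNB Set.inter_subset_left
  · -- J ≤ SatL J
    conv_lhs => rw [hJ.2]
    apply nspan_mono
    rintro f ⟨hfJ, hfL⟩
    exact ⟨hfL, MvPolynomial.totalDegree f, le_refl _, by rw [tProd_self, one_mul]; exact hfJ⟩
  · -- SatL J ≤ SatP J
    apply nspan_mono
    rintro f ⟨hfL, d', hd', hfJ⟩
    refine ⟨hfL.2, tProd K X (MvPolynomial.totalDegree f) d' * f, hfJ, ?_⟩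
    rw [map_mul, psi_tProd, one_mul]

end Final

/-- For a letterplace ideal `D ⊆ J ⊆ P̄`, the `L`-saturation `Sat_L(J)` is an
`L`-saturated letterplace ideal containing `J`, and `Sat_L(J) ⊆ Sat(J)`. -/
theorem statement_7 (K : Type*) [Field K] (X : Type*) [Countable X]
    (J : Ideal (PL K (Option X))) (hJ : IsLPIdeal K J) (hD : Did K X ≤ J) :
    IsLPIdeal K (SatL K J) ∧ IsLSat K (SatL K J) ∧ J ≤ SatL K J ∧ SatL K J ≤ SatP K J :=
  statement_7' K X J hJ hD
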